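/- Controllability does not imply conditional controllability: let L = \overline{{au}} ∥ \overline{{bu}} over alphabets E₁ = {a,u}, E₂ = {b,u}, E_k = {u}, with E_u = {u}, so L = \overline{{abu, bau}}. Then K = {a} is controllable with respect to L and E_u, both K and \overline{K} are conditionally decomposable with respect to E₁, E₂, E_k, but P_k(K) = {ε} is not controllable with respect to \overline{{u}} = {ε, u} and {u}. -/
import Mathlib


open scoped Classical

/-- Natural projection: erase letters not in `A`. -/
noncomputable def proj {Ev : Type*} (A : Set Ev) (w : List Ev) : List Ev :=
  w.filter (fun a => decide (a ∈ A))

/-- Projection of a language. -/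
noncomputable def projL {Ev : Type*} (A : Set Ev) (L : Set (List Ev)) : Set (List Ev) :=
  proj A '' L

/-- Words over an alphabet `A`, i.e., `A*`. -/
def star {Ev : Type*} (A : Set Ev) : Set (List Ev) := {w | ∀ a ∈ w, a ∈ A}

/-- Synchronous product of `L₁ ⊆ A*` and `L₂ ⊆ B*`. -/
noncomputable def sync {Ev : Type*} (A B : Set Ev) (L1 L2 : Set (List Ev)) :
    Set (List Ev) :=
  {w | w ∈ star (A ∪ B) ∧ proj A w ∈ L1 ∧ proj B w ∈ L2}

/-- Prefix closure of a language. -/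
def prefixCl {Ev : Type*} (L : Set (List Ev)) : Set (List Ev) := {w | ∃ v, w ++ v ∈ L}

/-- Controllability of `K` with respect to (prefix-closed) `L` and uncontrollable events `Eu`. -/
def controllable {Ev : Type*} (K L : Set (List Ev)) (Eu : Set Ev) : Prop :=
  ∀ s ∈ prefixCl K, ∀ u ∈ Eu, s ++ [u] ∈ L → s ++ [u] ∈ prefixCl K

/-- Supremal controllable sublanguage of `K` w.r.t. `N` and `U`. -/
noncomputable def supC {Ev : Type*} (K N : Set (List Ev)) (U : Set Ev) : Set (List Ev) :=
  ⋃₀ {M | M ⊆ K ∧ controllable M N U}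

/-- `proj A` is an `L`-observer. -/
def observer {Ev : Type*} (A : Set Ev) (L : Set (List Ev)) : Prop :=
  ∀ t ∈ projL A L, ∀ s ∈ prefixCl L, proj A s <+: t →
    ∃ u, s ++ u ∈ L ∧ proj A (s ++ u) = t

/-- `proj A` is locally control consistent (LCC) for `L` (w.r.t. uncontrollable events `Eu`). -/
def lcc {Ev : Type*} (A Eu : Set Ev) (L : Set (List Ev)) : Prop :=
  ∀ s ∈ L, ∀ σ ∈ A ∩ Eu, proj A s ++ [σ] ∈ projL A L →
    (∃ u, (∀ a ∈ u, a ∉ A) ∧ s ++ u ++ [σ] ∈ L) →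
    ∃ u, (∀ a ∈ u, a ∈ Eu ∧ a ∉ A) ∧ s ++ u ++ [σ] ∈ L

/-- Events for the counterexample of STATEMENT 7. -/
inductive Ev7 where
  | a | b | u
deriving DecidableEq

namespace Stmt7Aux

open Ev7

@[simp] lemma proj_nil {Ev : Type*} (A : Set Ev) : proj A [] = [] := rfl

lemma proj_cons_mem {Ev : Type*} {A : Set Ev} {x : Ev} (h : x ∈ A) (w : List Ev) :
    proj A (x :: w) = x :: proj A w := by
  simp [proj, List.filter_cons, h]

lemma proj_cons_not {Ev : Type*} {A : Set Ev} {x : Ev} (h : x ∉ A) (w : List Ev) :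
    proj A (x :: w) = proj A w := by
  simp [proj, List.filter_cons, h]

lemma proj_eq_nil_iff {Ev : Type*} {A : Set Ev} {w : List Ev} :
    proj A w = [] ↔ ∀ x ∈ w, x ∉ A := by
  simp [proj, List.filter_eq_nil_iff]

lemma proj_eq_self {Ev : Type*} {A : Set Ev} {w : List Ev} (h : ∀ x ∈ w, x ∈ A) :
    proj A w = w := by
  simp only [proj, List.filter_eq_self]
  simpa using h

@[simp] lemma p1a (w : List Ev7) : proj ({a,u} : Set Ev7) (a :: w) = a :: proj {a,u} w :=
  proj_cons_mem (by simp) w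
@[simp] lemma p1b (w : List Ev7) : proj ({a,u} : Set Ev7) (b :: w) = proj {a,u} w :=
  proj_cons_not (by simp) w
@[simp] lemma p1u (w : List Ev7) : proj ({a,u} : Set Ev7) (u :: w) = u :: proj {a,u} w :=
  proj_cons_mem (by simp) w
@[simp] lemma p2a (w : List Ev7) : proj ({b,u} : Set Ev7) (a :: w) = proj {b,u} w :=
  proj_cons_not (by simp) w
@[simp] lemma p2b (w : List Ev7) : proj ({b,u} : Set Ev7) (b :: w) = b :: proj {b,u} w :=
  proj_cons_mem (by simp) w
@[simp] lemma p2u (w : List Ev7) : proj ({b,u} : Set Ev7) (u :: w) = u :: proj {b,u} w :=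
  proj_cons_mem (by simp) w
@[simp] lemma pka (w : List Ev7) : proj ({u} : Set Ev7) (a :: w) = proj {u} w :=
  proj_cons_not (by simp) w
@[simp] lemma pkb (w : List Ev7) : proj ({u} : Set Ev7) (b :: w) = proj {u} w :=
  proj_cons_not (by simp) w
@[simp] lemma pku (w : List Ev7) : proj ({u} : Set Ev7) (u :: w) = u :: proj {u} w :=
  proj_cons_mem (by simp) w

lemma exists_append_iff {Ev : Type*} (s w : List Ev) : (∃ v, w ++ v = s) ↔ w <+: s := Iff.rfl

lemma mem_au (w : List Ev7) :
    w ∈ prefixCl ({[a,u]} : Set (List Ev7)) ↔ w = [] ∨ w = [a] ∨ w = [a,u] := by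
  simp only [prefixCl, Set.mem_setOf_eq, Set.mem_singleton_iff,
    exists_append_iff, List.prefix_cons_iff]
  aesop

lemma mem_bu (w : List Ev7) :
    w ∈ prefixCl ({[b,u]} : Set (List Ev7)) ↔ w = [] ∨ w = [b] ∨ w = [b,u] := by
  simp only [prefixCl, Set.mem_setOf_eq, Set.mem_singleton_iff,
    exists_append_iff, List.prefix_cons_iff]
  aesop

lemma mem_u (w : List Ev7) :
    w ∈ prefixCl ({[u]} : Set (List Ev7)) ↔ w = [] ∨ w = [u] := by
  simp only [prefixCl, Set.mem_setOf_eq, Set.mem_singleton_iff,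
    exists_append_iff, List.prefix_cons_iff]
  aesop

lemma mem_a (w : List Ev7) :
    w ∈ prefixCl ({[a]} : Set (List Ev7)) ↔ w = [] ∨ w = [a] := by
  simp only [prefixCl, Set.mem_setOf_eq, Set.mem_singleton_iff,
    exists_append_iff, List.prefix_cons_iff]
  aesop

lemma mem_eps (w : List Ev7) :
    w ∈ prefixCl ({([] : List Ev7)} : Set (List Ev7)) ↔ w = [] := by
  simp [prefixCl]

lemma mem_seven (w : List Ev7) : w ∈ prefixCl ({[a,b,u],[b,a,u]} : Set (List Ev7)) ↔
    w = [] ∨ w = [a] ∨ w = [b] ∨ w = [a,b] ∨ w = [b,a] ∨ w = [a,b,u] ∨ w = [b,a,u] := by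
  simp only [prefixCl, Set.mem_setOf_eq, Set.mem_insert_iff, Set.mem_singleton_iff, exists_or,
    exists_append_iff, List.prefix_cons_iff]
  aesop

lemma star_univ (w : List Ev7) : w ∈ star (({a,u} : Set Ev7) ∪ {b,u}) := by
  intro x _; cases x <;> simp

lemma len_le (w : List Ev7) :
    w.length ≤ (proj ({a,u} : Set Ev7) w).length + (proj ({b,u} : Set Ev7) w).length := by
  induction w with
  | nil => simp
  | cons x t ih => cases x <;> simp <;> omega

/-- The key language computation. -/
lemma L_eq :
    sync ({a,u} : Set Ev7) ({b,u} : Set Ev7) (prefixCl {[a,u]}) (prefixCl {[b,u]}) =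
      prefixCl ({[a,b,u],[b,a,u]} : Set (List Ev7)) := by
  ext w
  rw [mem_seven]
  constructor
  · rintro ⟨-, h1, h2⟩
    rw [mem_au] at h1
    rw [mem_bu] at h2
    have hlen := len_le w
    have l1 : (proj ({a,u} : Set Ev7) w).length ≤ 2 := by
      rcases h1 with h | h | h <;> simp [h]
    have l2 : (proj ({b,u} : Set Ev7) w).length ≤ 2 := by
      rcases h2 with h | h | h <;> simp [h]
    have hw4 : w.length ≤ 4 := by omega
    rcases w with - | ⟨x, - | ⟨y, - | ⟨z, - | ⟨v, rest⟩⟩⟩⟩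
    · simp
    · cases x <;> simp_all
    · cases x <;> cases y <;> simp_all
    · cases x <;> cases y <;> cases z <;> simp_all
    · have : rest = [] := by
        simp only [List.length_cons] at hw4
        have : rest.length = 0 := by omega
        exact List.length_eq_zero_iff.mp this
      subst this
      cases x <;> cases y <;> cases z <;> cases v <;> simp_all
  · rintro (rfl | rfl | rfl | rfl | rfl | rfl | rfl) <;>
      exact ⟨star_univ _, by rw [mem_au]; simp, by rw [mem_bu]; simp⟩

lemma E1k : (({a,u} : Set Ev7) ∪ {u}) = ({a,u} : Set Ev7) := by
  ext x; simp

lemma E2k : (({b,u} : Set Ev7) ∪ {u}) = ({b,u} : Set Ev7) := by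
  ext x; simp

lemma projL1 : projL ({a,u} : Set Ev7) ({[a]} : Set (List Ev7)) = {[a]} := by
  simp [projL, Set.image_singleton]

lemma projL2 : projL ({b,u} : Set Ev7) ({[a]} : Set (List Ev7)) = {([] : List Ev7)} := by
  simp [projL, Set.image_singleton]

lemma all_a_of {w : List Ev7} (h : ∀ x ∈ w, x ∉ ({b,u} : Set Ev7)) :
    ∀ x ∈ w, x ∈ ({a,u} : Set Ev7) := by
  intro x hx
  have := h x hx
  cases x <;> simp_all

end Stmt7Aux

open Ev7 Stmt7Aux in
/-- controllability does not imply conditional controllability. -/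
theorem stmt7 :
    let E1 : Set Ev7 := {a, u}
    let E2 : Set Ev7 := {b, u}
    let Ek : Set Ev7 := {u}
    let L : Set (List Ev7) :=
      sync E1 E2 (prefixCl {[a, u]}) (prefixCl {[b, u]})
    let K : Set (List Ev7) := {[a]}
    L = prefixCl {[a, b, u], [b, a, u]} ∧
    controllable K L {u} ∧
    K = sync (E1 ∪ Ek) (E2 ∪ Ek) (projL (E1 ∪ Ek) K) (projL (E2 ∪ Ek) K) ∧
    prefixCl K = sync (E1 ∪ Ek) (E2 ∪ Ek)
      (prefixCl (projL (E1 ∪ Ek) K)) (prefixCl (projL (E2 ∪ Ek) K)) ∧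
    projL Ek K = {([] : List Ev7)} ∧
    prefixCl ({[u]} : Set (List Ev7)) = {[], [u]} ∧
    ¬ controllable (projL Ek K) (prefixCl ({[u]} : Set (List Ev7))) {u} := by
  intro E1 E2 Ek L K
  have hL : L = prefixCl ({[a,b,u],[b,a,u]} : Set (List Ev7)) := L_eq
  have hprojk : projL Ek K = {([] : List Ev7)} := by
    show projL ({u} : Set Ev7) ({[a]} : Set (List Ev7)) = _
    simp [projL, Set.image_singleton]
  refine ⟨hL, ?_, ?_, ?_, hprojk, ?_, ?_⟩
  · -- controllability of K w.r.t. L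
    intro s hs u' hu' hmem
    have hu'' : u' = Ev7.u := hu'
    subst hu''
    have hs' : s = [] ∨ s = [a] := (mem_a s).mp hs
    rw [hL, mem_seven] at hmem
    rcases hs' with rfl | rfl <;> simp_all
  · -- conditional decomposability of K
    show ({[a]} : Set (List Ev7)) =
      sync (({a,u} : Set Ev7) ∪ {u}) (({b,u} : Set Ev7) ∪ {u})
        (projL (({a,u} : Set Ev7) ∪ {u}) {[a]}) (projL (({b,u} : Set Ev7) ∪ {u}) {[a]})
    rw [E1k, E2k, projL1, projL2]
    ext w
    simp only [sync, Set.mem_setOf_eq, Set.mem_singleton_iff]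
    constructor
    · rintro rfl
      exact ⟨star_univ _, by simp, by simp⟩
    · rintro ⟨-, h1, h2⟩
      rw [proj_eq_self (all_a_of (proj_eq_nil_iff.mp h2))] at h1
      exact h1
  · -- conditional decomposability of the prefix closure of K
    show prefixCl ({[a]} : Set (List Ev7)) =
      sync (({a,u} : Set Ev7) ∪ {u}) (({b,u} : Set Ev7) ∪ {u})
        (prefixCl (projL (({a,u} : Set Ev7) ∪ {u}) {[a]}))
        (prefixCl (projL (({b,u} : Set Ev7) ∪ {u}) {[a]}))
    rw [E1k, E2k, projL1, projL2]
    ext w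
    simp only [sync, Set.mem_setOf_eq]
    constructor
    · intro hw
      rcases (mem_a w).mp hw with rfl | rfl <;>
        exact ⟨star_univ _, by rw [mem_a]; simp, by rw [mem_eps]; simp⟩
    · rintro ⟨-, h1, h2⟩
      rw [mem_eps] at h2
      rw [proj_eq_self (all_a_of (proj_eq_nil_iff.mp h2))] at h1
      exact h1
  · -- prefix closure of {[u]}
    ext w
    rw [mem_u]
    simp [Set.mem_insert_iff]
  · -- Pk(K) is not controllable
    intro hc
    rw [hprojk] at hc
    have h := hc [] ((mem_eps []).mpr rfl) Ev7.u rfl ((mem_u [u]).mpr (Or.inr rfl))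
    have := (mem_eps [u]).mp h
    simp at this
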